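/- arXiv:1301.7632 — 2 statements merged into one kernel-verified Lean document; each statement's English description precedes it below -/
import Mathlib

section
/- If kΔ(P) is the k-th dilate of the order polytope of a finite pure poset P of height h_P, then kΔ(P) contains exactly one interior lattice point when k = h_P, and the number of interior lattice points of (h_P + 1)Δ(P) equals the number of order ideals of P, i.e., |J(P)|. -/
open Pointwise

/-- The order polytope of a finite poset `P`. -/
def orderPolytope (P : Type*) [PartialOrder P] : Set (P → ℝ) :=
  {x | (∀ u : P, x u ∈ Set.Icc (0 : ℝ) 1) ∧ ∀ u v : P, u ≤ v → x u ≤ x v}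

/-- `h` is the height function of a poset `Q`. -/
def IsHeightFn {Q : Type*} [PartialOrder Q] (h : Q → ℕ) : Prop :=
  ∀ u : Q, IsGreatest {n : ℕ | ∃ c : Fin (n + 1) → Q, StrictMono c ∧ c (Fin.last n) = u} (h u)

/-- A maximal chain of length `n` in a bounded poset. -/
def IsMaxChain' {Q : Type*} [PartialOrder Q] [BoundedOrder Q] {n : ℕ}
    (c : Fin (n + 1) → Q) : Prop :=
  c 0 = ⊥ ∧ c (Fin.last n) = ⊤ ∧ ∀ i : Fin n, c i.castSucc ⋖ c i.succ

set_option linter.unusedSectionVars false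
set_option maxHeartbeats 1000000

namespace Stmt11Aux

section Chains

variable {Q : Type*} [PartialOrder Q]

/-- two-element chain -/
def two (x y : Q) : Fin 2 → Q := fun i => if (i : ℕ) = 0 then x else y

lemma two_strictMono {x y : Q} (hxy : x < y) : StrictMono (two x y) := by
  intro i j hij
  have hi : (i : ℕ) < (j : ℕ) := hij
  have hj2 : (j : ℕ) < 2 := j.isLt
  have hi0 : (i : ℕ) = 0 := by omega
  have hj1 : (j : ℕ) = 1 := by omega
  simp [two, hi0, hj1, hxy]

@[simp] lemma two_zero (x y : Q) : two x y 0 = x := by simp [two]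

@[simp] lemma two_last (x y : Q) : two x y (Fin.last 1) = y := by simp [two, Fin.last]

/-- glue two chains sharing an endpoint -/
def glue {a b : ℕ} (c1 : Fin (a + 1) → Q) (c2 : Fin (b + 1) → Q) : Fin (a + b + 1) → Q :=
  fun i => if h : (i : ℕ) ≤ a then c1 ⟨i, by omega⟩ else c2 ⟨(i : ℕ) - a, by omega⟩

lemma glue_apply_le {a b : ℕ} (c1 : Fin (a + 1) → Q) (c2 : Fin (b + 1) → Q)
    (i : Fin (a + b + 1)) (hi : (i : ℕ) ≤ a) :
    glue c1 c2 i = c1 ⟨i, by omega⟩ := by simp [glue, hi]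

lemma glue_apply_ge {a b : ℕ} {c1 : Fin (a + 1) → Q} {c2 : Fin (b + 1) → Q}
    (hm : c1 (Fin.last a) = c2 0)
    (i : Fin (a + b + 1)) (hi : a ≤ (i : ℕ)) :
    glue c1 c2 i = c2 ⟨(i : ℕ) - a, by omega⟩ := by
  rcases eq_or_lt_of_le hi with heq | hlt
  · have : (i : ℕ) ≤ a := le_of_eq heq.symm
    rw [glue_apply_le c1 c2 i this]
    have h1 : (⟨(i : ℕ), by omega⟩ : Fin (a + 1)) = Fin.last a := by
      ext; simp [Fin.last, ← heq]
    have h2 : (⟨(i : ℕ) - a, by omega⟩ : Fin (b + 1)) = 0 := by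
      ext; simp [← heq]
    rw [h1, h2, hm]
  · simp [glue, not_le.mpr hlt]

@[simp] lemma glue_zero {a b : ℕ} (c1 : Fin (a + 1) → Q) (c2 : Fin (b + 1) → Q) :
    glue c1 c2 0 = c1 0 := by
  rw [glue_apply_le c1 c2 0 (by simp)]
  congr 1

lemma glue_last {a b : ℕ} {c1 : Fin (a + 1) → Q} {c2 : Fin (b + 1) → Q}
    (hm : c1 (Fin.last a) = c2 0) :
    glue c1 c2 (Fin.last (a + b)) = c2 (Fin.last b) := by
  rw [glue_apply_ge hm (Fin.last (a + b)) (by simp [Fin.last])]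
  congr 1
  ext
  simp [Fin.last]

lemma glue_strictMono {a b : ℕ} {c1 : Fin (a + 1) → Q} {c2 : Fin (b + 1) → Q}
    (h1 : StrictMono c1) (h2 : StrictMono c2) (hm : c1 (Fin.last a) = c2 0) :
    StrictMono (glue c1 c2) := by
  intro i j hij
  have hij' : (i : ℕ) < (j : ℕ) := hij
  by_cases hja : (j : ℕ) ≤ a
  · rw [glue_apply_le c1 c2 i (by omega), glue_apply_le c1 c2 j hja]
    exact h1 (Fin.mk_lt_mk.mpr hij')
  · push_neg at hja
    rw [glue_apply_ge hm j (by omega)]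
    by_cases hia : (i : ℕ) ≤ a
    · rw [glue_apply_le c1 c2 i hia]
      calc c1 ⟨(i : ℕ), by omega⟩ ≤ c1 (Fin.last a) := h1.monotone (by simp [Fin.le_def, Fin.last, hia])
        _ = c2 0 := hm
        _ < c2 ⟨(j : ℕ) - a, by omega⟩ := h2 (by simp [Fin.lt_def]; omega)
    · push_neg at hia
      rw [glue_apply_ge hm i (by omega)]
      exact h2 (by simp [Fin.lt_def]; omega)

/-- a chain has no gap if nothing can be inserted between consecutive elements -/
def NoGap {n : ℕ} (c : Fin (n + 1) → Q) : Prop :=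
  ∀ (i : Fin n) (x : Q), c i.castSucc < x → x < c i.succ → False

/-- inserting an element into a gap of a chain -/
lemma insert_chain {n : ℕ} {c : Fin (n + 1) → Q} (hc : StrictMono c)
    {i : Fin n} {x : Q} (h1 : c i.castSucc < x) (h2 : x < c i.succ) :
    ∃ c' : Fin (n + 2) → Q, StrictMono c' ∧ c' 0 = c 0 ∧
      c' (Fin.last (n + 1)) = c (Fin.last n) := by
  set c' : Fin (n + 2) → Q := fun j =>
    if hj : (j : ℕ) ≤ (i : ℕ) then c ⟨j, by omega⟩
    else if (j : ℕ) = (i : ℕ) + 1 then x else c ⟨(j : ℕ) - 1, by omega⟩ with hc'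
  have hlt : ∀ p q : ℕ, (hp : p ≤ n) → (hq : q ≤ n) → p < q → c ⟨p, by omega⟩ < c ⟨q, by omega⟩ :=
    fun p q hp hq hpq => hc (Fin.mk_lt_mk.mpr hpq)
  have hle : ∀ p q : ℕ, (hp : p ≤ n) → (hq : q ≤ n) → p ≤ q → c ⟨p, by omega⟩ ≤ c ⟨q, by omega⟩ :=
    fun p q hp hq hpq => hc.monotone (Fin.mk_le_mk.mpr hpq)
  have hcast : c i.castSucc = c ⟨(i : ℕ), by omega⟩ := by congr 1
  have hsucc : c i.succ = c ⟨(i : ℕ) + 1, by omega⟩ := by congr 1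
  rw [hcast] at h1; rw [hsucc] at h2
  have hiln : (i : ℕ) < n := i.isLt
  refine ⟨c', ?_, ?_, ?_⟩
  · intro p q hpq
    have hpq' : (p : ℕ) < (q : ℕ) := hpq
    have hpn : (p : ℕ) ≤ n + 1 := by omega
    have hqn : (q : ℕ) ≤ n + 1 := by omega
    simp only [hc']
    by_cases hq1 : (q : ℕ) ≤ (i : ℕ)
    · rw [dif_pos hq1, dif_pos (by omega : (p : ℕ) ≤ (i : ℕ))]
      exact hlt _ _ (by omega) (by omega) hpq'
    · rw [dif_neg hq1]
      by_cases hq2 : (q : ℕ) = (i : ℕ) + 1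
      · rw [if_pos hq2]
        rw [dif_pos (by omega : (p : ℕ) ≤ (i : ℕ))]
        exact lt_of_le_of_lt (hle _ _ (by omega) (by omega) (by omega)) h1
      · rw [if_neg hq2]
        by_cases hp1 : (p : ℕ) ≤ (i : ℕ)
        · rw [dif_pos hp1]
          refine lt_of_le_of_lt (hle _ _ (by omega) (by omega) (by omega) :
            c ⟨(p : ℕ), by omega⟩ ≤ c ⟨(i : ℕ), by omega⟩) (lt_trans h1 ?_)
          exact lt_of_lt_of_le h2 (hle _ _ (by omega) (by omega) (by omega))
        · rw [dif_neg hp1]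
          by_cases hp2 : (p : ℕ) = (i : ℕ) + 1
          · rw [if_pos hp2]
            exact lt_of_lt_of_le h2 (hle _ _ (by omega) (by omega) (by omega))
          · rw [if_neg hp2]
            exact hlt _ _ (by omega) (by omega) (by omega)
  · simp only [hc']
    rw [dif_pos (by simp : ((0 : Fin (n + 2)) : ℕ) ≤ (i : ℕ))]
    congr 1
  · simp only [hc']
    rw [dif_neg (by simp [Fin.last]), if_neg (by simp [Fin.last]; omega)]
    congr 1

/-- going along a chain, a strictly monotone integer function increases by at least the length -/
lemma chain_le {n : ℕ} {c : Fin (n + 1) → Q} (hc : StrictMono c)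
    {X : Q → ℤ} (hX : StrictMono X) :
    X (c 0) + n ≤ X (c (Fin.last n)) := by
  have key : ∀ m : ℕ, (hm : m ≤ n) → X (c 0) + m ≤ X (c ⟨m, by omega⟩) := by
    intro m
    induction m with
    | zero => intro _; simp [show (⟨0, by omega⟩ : Fin (n + 1)) = 0 from rfl]
    | succ p ih =>
      intro hm
      have h1 := ih (by omega)
      have h2 : X (c ⟨p, by omega⟩) < X (c ⟨p + 1, by omega⟩) :=
        hX (hc (Fin.mk_lt_mk.mpr (by omega)))
      omega
  have := key n le_rfl
  simpa [Fin.last] using this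

lemma glue_noGap {a b : ℕ} {c1 : Fin (a + 1) → Q} {c2 : Fin (b + 1) → Q}
    (h1 : NoGap c1) (h2 : NoGap c2) (hm : c1 (Fin.last a) = c2 0) :
    NoGap (glue c1 c2) := by
  intro i x hx1 hx2
  have hi : (i.castSucc : ℕ) = (i : ℕ) := rfl
  have hi' : (i.succ : ℕ) = (i : ℕ) + 1 := rfl
  by_cases hia : (i : ℕ) + 1 ≤ a
  · rw [glue_apply_le c1 c2 i.castSucc (by omega)] at hx1
    rw [glue_apply_le c1 c2 i.succ (by omega)] at hx2
    exact h1 ⟨(i : ℕ), by omega⟩ x hx1 hx2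
  · have hia' : a ≤ (i : ℕ) := by omega
    rw [glue_apply_ge hm i.castSucc (by omega)] at hx1
    rw [glue_apply_ge hm i.succ (by omega)] at hx2
    have e : (⟨(i : ℕ) - a, by omega⟩ : Fin b).succ =
        (⟨(i : ℕ) + 1 - a, by omega⟩ : Fin (b + 1)) := by
      ext
      show (i : ℕ) - a + 1 = (i : ℕ) + 1 - a
      omega
    refine h2 ⟨(i : ℕ) - a, by omega⟩ x hx1 ?_
    rw [e]
    exact hx2

end Chains

section Bounded

variable {Q : Type*} [PartialOrder Q] [BoundedOrder Q] {h : Q → ℕ} (hh : IsHeightFn h)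

lemma isMaxChain'_of_noGap {n : ℕ} {c : Fin (n + 1) → Q} (hc : StrictMono c)
    (hng : NoGap c) (h0 : c 0 = ⊥) (h1 : c (Fin.last n) = ⊤) : IsMaxChain' c :=
  ⟨h0, h1, fun i => ⟨hc (Fin.castSucc_lt_succ (i := i)), fun x hx1 hx2 => hng i x hx1 hx2⟩⟩

include hh

/-- a chain realizing the height `h u` -/
lemma height_chain (u : Q) :
    ∃ c : Fin (h u + 1) → Q, StrictMono c ∧ c (Fin.last (h u)) = u ∧ c 0 = ⊥ ∧ NoGap c := by
  obtain ⟨c, hc, hlast⟩ := (hh u).1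
  refine ⟨c, hc, hlast, ?_, ?_⟩
  · by_contra h0
    have hbot : (⊥ : Q) < c 0 := bot_lt_iff_ne_bot.mpr h0
    have : StrictMono (glue (two ⊥ (c 0)) c) :=
      glue_strictMono (two_strictMono hbot) hc (two_last _ _)
    have hmem : 1 + h u ∈ {n : ℕ | ∃ c : Fin (n + 1) → Q, StrictMono c ∧ c (Fin.last n) = u} :=
      ⟨glue (two ⊥ (c 0)) c, this, by rw [glue_last (two_last _ _), hlast]⟩
    have := (hh u).2 hmem
    omega
  · intro i x hx1 hx2
    obtain ⟨c', hc', h0', hl'⟩ := insert_chain hc hx1 hx2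
    have hmem : h u + 1 ∈ {n : ℕ | ∃ c : Fin (n + 1) → Q, StrictMono c ∧ c (Fin.last n) = u} :=
      ⟨c', hc', by rw [hl', hlast]⟩
    have := (hh u).2 hmem
    omega

/-- the set of lengths of chains from u to v -/
def chainLens (u v : Q) : Set ℕ :=
  {m | ∃ c : Fin (m + 1) → Q, StrictMono c ∧ c 0 = u ∧ c (Fin.last m) = v}

omit hh in
lemma chainLens_nonempty {u v : Q} (huv : u ≤ v) : (chainLens u v).Nonempty := by
  rcases eq_or_lt_of_le huv with rfl | hlt
  · exact ⟨0, fun _ => u, fun i j hij => absurd hij (by omega), rfl, rfl⟩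
  · exact ⟨1, two u v, two_strictMono hlt, two_zero u v, two_last u v⟩

lemma chainLens_bddAbove (u v : Q) : BddAbove (chainLens u v) := by
  refine ⟨h v, fun m hm => ?_⟩
  obtain ⟨c, hc, h0, hl⟩ := hm
  exact (hh v).2 ⟨c, hc, hl⟩

/-- the maximal chain length from u to v -/
noncomputable def upLen (u v : Q) : ℕ := sSup (chainLens u v)

lemma upLen_chain {u v : Q} (huv : u ≤ v) :
    ∃ c : Fin (upLen u v + 1) → Q, StrictMono c ∧ c 0 = u ∧
      c (Fin.last (upLen u v)) = v ∧ NoGap c := by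
  obtain ⟨c, hc, h0, hl⟩ :=
    Nat.sSup_mem (chainLens_nonempty huv) (chainLens_bddAbove hh u v)
  refine ⟨c, hc, h0, hl, ?_⟩
  intro i x hx1 hx2
  obtain ⟨c', hc', h0', hl'⟩ := insert_chain hc hx1 hx2
  have hmem : upLen u v + 1 ∈ chainLens u v :=
    ⟨c', hc', h0'.trans h0, by rw [show Fin.last (upLen u v + 1) =
      Fin.last (sSup (chainLens u v) + 1) from rfl, hl', hl]⟩
  have := le_csSup (chainLens_bddAbove hh u v) hmem
  have : upLen u v + 1 ≤ upLen u v := this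
  omega

variable (hpure : ∀ (n m : ℕ) (c : Fin (n + 1) → Q) (c' : Fin (m + 1) → Q),
      IsMaxChain' c → IsMaxChain' c' → n = m)

include hpure

lemma pure_top (u : Q) : h u + upLen u ⊤ = h ⊤ := by
  obtain ⟨c1, hc1, hl1, h01, hg1⟩ := height_chain hh u
  obtain ⟨c2, hc2, h02, hl2, hg2⟩ := upLen_chain hh (le_top : u ≤ ⊤)
  have hm : c1 (Fin.last (h u)) = c2 0 := by rw [hl1, h02]
  have hfull : IsMaxChain' (glue c1 c2) :=
    isMaxChain'_of_noGap (glue_strictMono hc1 hc2 hm) (glue_noGap hg1 hg2 hm)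
      (by rw [glue_zero, h01]) (by rw [glue_last hm, hl2])
  obtain ⟨ct, hct, hlt, h0t, hgt⟩ := height_chain hh (⊤ : Q)
  have htop : IsMaxChain' ct := isMaxChain'_of_noGap hct hgt h0t hlt
  exact hpure _ _ _ _ hfull htop

lemma pure_between {u v : Q} (huv : u ≤ v) : h u + upLen u v = h v := by
  obtain ⟨c1, hc1, hl1, h01, hg1⟩ := height_chain hh u
  obtain ⟨c2, hc2, h02, hl2, hg2⟩ := upLen_chain hh huv
  obtain ⟨c3, hc3, h03, hl3, hg3⟩ := upLen_chain hh (le_top : v ≤ ⊤)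
  have hm12 : c1 (Fin.last (h u)) = c2 0 := by rw [hl1, h02]
  have hm23 : glue c1 c2 (Fin.last (h u + upLen u v)) = c3 0 := by
    rw [glue_last hm12, hl2, h03]
  have hfull : IsMaxChain' (glue (glue c1 c2) c3) :=
    isMaxChain'_of_noGap
      (glue_strictMono (glue_strictMono hc1 hc2 hm12) hc3 hm23)
      (glue_noGap (glue_noGap hg1 hg2 hm12) hg3 hm23)
      (by rw [glue_zero, glue_zero, h01]) (by rw [glue_last hm23, hl3])
  obtain ⟨ct, hct, hlt, h0t, hgt⟩ := height_chain hh (⊤ : Q)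
  have htop : IsMaxChain' ct := isMaxChain'_of_noGap hct hgt h0t hlt
  have h1 : h u + upLen u v + upLen v ⊤ = h ⊤ := hpure _ _ _ _ hfull htop
  have h2 : h v + upLen v ⊤ = h ⊤ := pure_top hh hpure v
  omega

/-- key consequence: heights are monotone and strictly monotone integer maps grow
at least as fast as the height -/
lemma height_gap {u v : Q} (huv : u ≤ v) :
    h u ≤ h v ∧ ∀ X : Q → ℤ, StrictMono X → X u + ((h v : ℤ) - (h u : ℤ)) ≤ X v := by
  have hkey := pure_between hh hpure huv
  constructor
  · omega
  · intro X hX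
    obtain ⟨c, hc, h0, hl, _⟩ := upLen_chain hh huv
    have := chain_le hc hX
    rw [h0, hl] at this
    omega

lemma height_strictMono {u v : Q} (huv : u < v) : h u < h v := by
  have := pure_between hh hpure huv.le
  have h1 : 1 ≤ upLen u v :=
    le_csSup (chainLens_bddAbove hh u v)
      ⟨two u v, two_strictMono huv, two_zero u v, two_last u v⟩
  omega

end Bounded

section Interior

variable {P : Type*} [Fintype P] [PartialOrder P]

lemma mem_smul_orderPolytope {k : ℝ} (hk : 0 < k) {y : P → ℝ} (hy : y ∈ k • orderPolytope P) :
    (∀ u, 0 ≤ y u ∧ y u ≤ k) ∧ ∀ u v : P, u ≤ v → y u ≤ y v := by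
  obtain ⟨z, ⟨hz1, hz2⟩, rfl⟩ := hy
  constructor
  · intro u
    have := hz1 u
    constructor
    · exact mul_nonneg hk.le this.1
    · calc k * z u ≤ k * 1 := by nlinarith [this.2]
        _ = k := mul_one k
  · intro u v huv
    exact mul_le_mul_of_nonneg_left (hz2 u v huv) hk.le

lemma smul_orderPolytope_mem {k : ℝ} (hk : 0 < k) {y : P → ℝ}
    (h1 : ∀ u, 0 ≤ y u ∧ y u ≤ k) (h2 : ∀ u v : P, u ≤ v → y u ≤ y v) :
    y ∈ k • orderPolytope P := by
  refine ⟨k⁻¹ • y, ⟨?_, ?_⟩, ?_⟩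
  · intro u
    have := h1 u
    constructor
    · exact mul_nonneg (inv_nonneg.mpr hk.le) this.1
    · rw [Pi.smul_apply, smul_eq_mul, inv_mul_le_one₀ hk]
      exact this.2
  · intro u v huv
    exact mul_le_mul_of_nonneg_left (h2 u v huv) (inv_nonneg.mpr hk.le)
  · show k • k⁻¹ • y = y
    rw [smul_smul, mul_inv_cancel₀ hk.ne', one_smul]

theorem mem_interior_smul_orderPolytope {k : ℝ} (hk : 0 < k) (x : P → ℝ) :
    x ∈ interior (k • orderPolytope P) ↔
      (∀ u, 0 < x u ∧ x u < k) ∧ ∀ u v : P, u < v → x u < x v := by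
  classical
  constructor
  · intro hx
    rw [mem_interior_iff_mem_nhds, Metric.mem_nhds_iff] at hx
    obtain ⟨ε, hε, hball⟩ := hx
    have hpert : ∀ (u : P) (t : ℝ), |t| ≤ ε / 2 →
        Function.update x u (x u + t) ∈ k • orderPolytope P := by
      intro u t ht
      apply hball
      rw [Metric.mem_ball]
      have : dist (Function.update x u (x u + t)) x ≤ ε / 2 := by
        rw [dist_pi_le_iff (by linarith)]
        intro i
        by_cases hi : i = u
        · subst hi
          rw [Function.update_self, Real.dist_eq]
          simpa using ht
        · rw [Function.update_of_ne hi, dist_self]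
          linarith
      linarith
    have hhalf : (0:ℝ) < ε / 2 := by linarith
    have habs : |(-(ε/2) : ℝ)| ≤ ε / 2 := by rw [abs_neg, abs_of_pos hhalf]
    have habs' : |(ε/2 : ℝ)| ≤ ε / 2 := by rw [abs_of_pos hhalf]
    constructor
    · intro u
      constructor
      · have := (mem_smul_orderPolytope hk (hpert u (-(ε/2)) habs)).1 u
        rw [Function.update_self] at this
        linarith [this.1]
      · have := (mem_smul_orderPolytope hk (hpert u (ε/2) habs')).1 u
        rw [Function.update_self] at this
        linarith [this.2]
    · intro u v huv
      have hne : v ≠ u := (ne_of_gt huv)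
      have := (mem_smul_orderPolytope hk (hpert u (ε/2) habs')).2 u v huv.le
      rw [Function.update_self, Function.update_of_ne hne] at this
      linarith
  · intro ⟨hbd, hmono⟩
    have hA : IsOpen {y : P → ℝ | ∀ u, 0 < y u ∧ y u < k} := by
      rw [Set.setOf_forall]
      apply isOpen_iInter_of_finite
      intro u
      have : {y : P → ℝ | 0 < y u ∧ y u < k} = {y | 0 < y u} ∩ {y | y u < k} :=
        Set.setOf_and
      rw [this]
      exact IsOpen.inter (isOpen_lt continuous_const (continuous_apply u))
        (isOpen_lt (continuous_apply u) continuous_const)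
    have hB : IsOpen {y : P → ℝ | ∀ u v : P, u < v → y u < y v} := by
      rw [Set.setOf_forall]
      apply isOpen_iInter_of_finite
      intro u
      rw [Set.setOf_forall]
      apply isOpen_iInter_of_finite
      intro v
      by_cases huv : u < v
      · have : {y : P → ℝ | u < v → y u < y v} = {y | y u < y v} := by
          ext y; simp [huv]
        rw [this]
        exact isOpen_lt (continuous_apply u) (continuous_apply v)
      · have : {y : P → ℝ | u < v → y u < y v} = Set.univ := by
          ext y; simp [huv]
        rw [this]
        exact isOpen_univ
    have hopen : IsOpen {y : P → ℝ | (∀ u, 0 < y u ∧ y u < k) ∧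
        ∀ u v : P, u < v → y u < y v} := by
      rw [Set.setOf_and]
      exact hA.inter hB
    have hsub : {y : P → ℝ | (∀ u, 0 < y u ∧ y u < k) ∧ ∀ u v : P, u < v → y u < y v} ⊆
        k • orderPolytope P := by
      intro y ⟨h1, h2⟩
      apply smul_orderPolytope_mem hk
      · intro u; exact ⟨(h1 u).1.le, (h1 u).2.le⟩
      · intro u v huv
        rcases eq_or_lt_of_le huv with rfl | hlt
        · exact le_refl _
        · exact (h2 u v hlt).le
    exact interior_maximal hsub hopen ⟨hbd, hmono⟩

end Interior

section WithBotTop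

variable {P : Type*} [PartialOrder P]

def coeP (u : P) : WithBot (WithTop P) := ((u : WithTop P) : WithBot (WithTop P))

lemma coeP_lt_coeP {u v : P} : coeP u < coeP v ↔ u < v := by
  simp [coeP]

lemma bot_lt_coeP (u : P) : (⊥ : WithBot (WithTop P)) < coeP u := WithBot.bot_lt_coe _

lemma coeP_lt_top (u : P) : coeP u < (⊤ : WithBot (WithTop P)) := by
  have : (⊤ : WithBot (WithTop P)) = ((⊤ : WithTop P) : WithBot (WithTop P)) := rfl
  rw [this, coeP, WithBot.coe_lt_coe]
  exact WithTop.coe_lt_top u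

lemma bot_lt_top_Q : (⊥ : WithBot (WithTop P)) < ⊤ := by
  have : (⊤ : WithBot (WithTop P)) = ((⊤ : WithTop P) : WithBot (WithTop P)) := rfl
  rw [this]
  exact WithBot.bot_lt_coe _

def extFn (k : ℤ) (x : P → ℤ) : WithBot (WithTop P) → ℤ :=
  fun q => WithBot.recBotCoe 0 (fun t => WithTop.recTopCoe k x t) q

@[simp] lemma extFn_bot (k : ℤ) (x : P → ℤ) : extFn k x ⊥ = 0 := rfl
@[simp] lemma extFn_top (k : ℤ) (x : P → ℤ) : extFn k x ⊤ = k := rfl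
@[simp] lemma extFn_coeP (k : ℤ) (x : P → ℤ) (u : P) : extFn k x (coeP u) = x u := rfl

lemma extFn_strictMono {k : ℤ} (x : P → ℤ) (hk : 0 < k) (h0 : ∀ u, 0 < x u)
    (hku : ∀ u, x u < k) (hmono : ∀ u v : P, u < v → x u < x v) :
    StrictMono (extFn k x) := by
  intro q q' hlt
  induction q using WithBot.recBotCoe with
  | bot =>
    induction q' using WithBot.recBotCoe with
    | bot => exact absurd hlt (lt_irrefl _)
    | coe t =>
      induction t using WithTop.recTopCoe with
      | top => exact hk
      | coe u => simpa [extFn] using h0 u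
  | coe t =>
    induction q' using WithBot.recBotCoe with
    | bot => exact absurd hlt (by simp)
    | coe t' =>
      have htt : t < t' := WithBot.coe_lt_coe.mp hlt
      induction t using WithTop.recTopCoe with
      | top => exact absurd htt (by simp)
      | coe u =>
        induction t' using WithTop.recTopCoe with
        | top => exact hku u
        | coe v => simpa [extFn] using hmono u v (WithTop.coe_lt_coe.mp htt)

end WithBotTop

end Stmt11Aux

open Stmt11Aux in
/-- For a finite pure poset `P` of height `h_P`, the dilate `h_P·Δ(P)` of the
order polytope has exactly one interior lattice point, and the number of
interior lattice points of `(h_P + 1)·Δ(P)` equals the number of order ideals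
of `P`, i.e. `|J(P)|`. -/
theorem stmt_11 (P : Type*) [Fintype P] [PartialOrder P]
    (h : WithBot (WithTop P) → ℕ) (hh : IsHeightFn h)
    (hpure : ∀ (n m : ℕ) (c : Fin (n + 1) → WithBot (WithTop P))
      (c' : Fin (m + 1) → WithBot (WithTop P)),
      IsMaxChain' c → IsMaxChain' c' → n = m) :
    Nat.card {x : P → ℤ //
        (fun u => (x u : ℝ)) ∈ interior ((h ⊤ : ℝ) • orderPolytope P)} = 1 ∧
    Nat.card {x : P → ℤ //
        (fun u => (x u : ℝ)) ∈ interior (((h ⊤ : ℕ) + 1 : ℝ) • orderPolytope P)} =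
      Nat.card (LowerSet P) := by
  classical
  have hbt : (⊥ : WithBot (WithTop P)) < ⊤ := bot_lt_top_Q
  have hk1 : 1 ≤ h ⊤ :=
    (hh ⊤).2 ⟨two ⊥ ⊤, two_strictMono hbt, two_last _ _⟩
  have hbot0 : h ⊥ = 0 := by
    by_contra h0
    obtain ⟨c, hc, hl⟩ := (hh (⊥ : WithBot (WithTop P))).1
    have h1 : (0 : Fin (h (⊥ : WithBot (WithTop P)) + 1)) <
        Fin.last (h (⊥ : WithBot (WithTop P))) := by
      rw [Fin.lt_def]
      show 0 < h (⊥ : WithBot (WithTop P))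
      omega
    have := hc h1
    rw [hl] at this
    exact not_lt_bot this
  have hmonoH : ∀ {a b : WithBot (WithTop P)}, a < b → h a < h b :=
    fun hab => height_strictMono hh hpure hab
  -- characterization of interior lattice points
  have hcond : ∀ (k : ℝ) (K : ℤ), (K : ℝ) = k → 0 < k → ∀ x : P → ℤ,
      ((fun u => (x u : ℝ)) ∈ interior (k • orderPolytope P) ↔
        ((∀ u, 0 < x u ∧ x u < K) ∧ ∀ u v : P, u < v → x u < x v)) := by
    intro k K hKk hk x
    rw [mem_interior_smul_orderPolytope hk]
    have c1 : ∀ a : ℤ, ((0:ℝ) < (a:ℝ) ↔ 0 < a) := fun a => by exact_mod_cast Iff.rfl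
    have c2 : ∀ a : ℤ, ((a:ℝ) < k ↔ a < K) := fun a => by
      rw [← hKk]; exact_mod_cast Iff.rfl
    have c3 : ∀ a b : ℤ, ((a:ℝ) < (b:ℝ) ↔ a < b) := fun a b => by exact_mod_cast Iff.rfl
    constructor
    · rintro ⟨h1, h2⟩
      exact ⟨fun u => ⟨(c1 _).mp (h1 u).1, (c2 _).mp (h1 u).2⟩,
        fun u v huv => (c3 _ _).mp (h2 u v huv)⟩
    · rintro ⟨h1, h2⟩
      exact ⟨fun u => ⟨(c1 _).mpr (h1 u).1, (c2 _).mpr (h1 u).2⟩,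
        fun u v huv => (c3 _ _).mpr (h2 u v huv)⟩
  -- bounds for points with given conditions
  have hbounds : ∀ (K : ℤ), 0 < K → ∀ x : P → ℤ,
      (∀ u, 0 < x u ∧ x u < K) → (∀ u v : P, u < v → x u < x v) →
      (∀ u : P, (h (coeP u) : ℤ) ≤ x u ∧
        x u ≤ K - (h ⊤ : ℤ) + (h (coeP u) : ℤ)) ∧
      (∀ u v : P, u ≤ v → x u + ((h (coeP v) : ℤ) - (h (coeP u) : ℤ)) ≤ x v) := by
    intro K hK x h1 h2
    have hX : StrictMono (extFn K x) :=
      extFn_strictMono x hK (fun u => (h1 u).1) (fun u => (h1 u).2) h2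
    constructor
    · intro u
      have hlow := (height_gap hh hpure (bot_le : ⊥ ≤ coeP u)).2 _ hX
      have hhigh := (height_gap hh hpure (le_top : coeP u ≤ ⊤)).2 _ hX
      simp only [extFn_bot, extFn_top, extFn_coeP] at hlow hhigh
      rw [hbot0] at hlow
      constructor <;> omega
    · intro u v huv
      rcases eq_or_lt_of_le huv with rfl | hlt
      · omega
      · have := (height_gap hh hpure (coeP_lt_coeP.mpr hlt).le).2 _ hX
        simp only [extFn_coeP] at this
        exact this
  -- properties of the height of elements of P
  have hHpos : ∀ u : P, 0 < h (coeP u) := by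
    intro u
    have := hmonoH (bot_lt_coeP u)
    omega
  have hHlt : ∀ u : P, h (coeP u) < h ⊤ := fun u => hmonoH (coeP_lt_top u)
  constructor
  · -- part 1 : exactly one interior point in (h ⊤) • Δ(P)
    have hcond1 := hcond ((h ⊤ : ℕ) : ℝ) ((h ⊤ : ℕ) : ℤ) (by push_cast; ring)
      (by exact_mod_cast hk1)
    have hx₀mem : (fun u => (((h (coeP u) : ℤ) : ℝ))) ∈
        interior ((h ⊤ : ℝ) • orderPolytope P) := by
      apply (hcond1 (fun u => (h (coeP u) : ℤ))).mpr
      refine ⟨fun u => ⟨?_, ?_⟩, fun u v huv => ?_⟩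
      · exact_mod_cast hHpos u
      · exact_mod_cast hHlt u
      · exact_mod_cast hmonoH (coeP_lt_coeP.mpr huv)
    have huniq : ∀ x : P → ℤ,
        (fun u => ((x u : ℝ))) ∈ interior ((h ⊤ : ℝ) • orderPolytope P) →
          x = fun u => (h (coeP u) : ℤ) := by
      intro x hx
      obtain ⟨h1, h2⟩ := (hcond1 x).mp hx
      obtain ⟨hb, _⟩ := hbounds _ (by exact_mod_cast hk1) x h1 h2
      funext u
      have := hb u
      omega
    have hne : Nonempty {x : P → ℤ //
        (fun u => (x u : ℝ)) ∈ interior ((h ⊤ : ℝ) • orderPolytope P)} :=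
      ⟨⟨fun u => (h (coeP u) : ℤ), hx₀mem⟩⟩
    have hsub : Subsingleton {x : P → ℤ //
        (fun u => (x u : ℝ)) ∈ interior ((h ⊤ : ℝ) • orderPolytope P)} :=
      ⟨fun a b => Subtype.ext (by rw [huniq a.1 a.2, huniq b.1 b.2])⟩
    rw [Nat.card_eq_one_iff_unique]
    exact ⟨hsub, hne⟩
  · -- part 2 : bijection with lower sets
    have hcond2 := hcond (((h ⊤ : ℕ) : ℝ) + 1) (((h ⊤ : ℕ) : ℤ) + 1) (by push_cast; ring)
      (by positivity)
    set f : {x : P → ℤ //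
        (fun u => (x u : ℝ)) ∈ interior (((h ⊤ : ℕ) + 1 : ℝ) • orderPolytope P)} →
        LowerSet P :=
      fun x => ⟨{u : P | x.1 u ≤ (h (coeP u) : ℤ)}, by
        obtain ⟨x, hx⟩ := x
        obtain ⟨h1, h2⟩ := (hcond2 x).mp hx
        obtain ⟨hb, hstep⟩ := hbounds _ (by positivity) x h1 h2
        intro a b hba hmem
        simp only [Set.mem_setOf_eq] at hmem ⊢
        have := hstep b a hba
        omega⟩ with hf
    apply Nat.card_congr (Equiv.ofBijective f ⟨?_, ?_⟩)
    · -- injective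
      rintro ⟨x, hx⟩ ⟨y, hy⟩ hfe
      obtain ⟨hx1, hx2⟩ := (hcond2 x).mp hx
      obtain ⟨hbx, _⟩ := hbounds _ (by positivity) x hx1 hx2
      obtain ⟨hy1, hy2⟩ := (hcond2 y).mp hy
      obtain ⟨hby, _⟩ := hbounds _ (by positivity) y hy1 hy2
      apply Subtype.ext
      funext u
      show x u = y u
      have hiff : (x u ≤ (h (coeP u) : ℤ)) ↔ (y u ≤ (h (coeP u) : ℤ)) := by
        have := SetLike.ext_iff.mp hfe u
        simpa [hf, LowerSet.mem_mk, Set.mem_setOf_eq] using this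
      have h1 := hbx u
      have h2 := hby u
      by_cases hc : x u ≤ (h (coeP u) : ℤ)
      · have := hiff.mp hc
        omega
      · have : ¬ (y u ≤ (h (coeP u) : ℤ)) := fun hcy => hc (hiff.mpr hcy)
        omega
    · -- surjective
      intro I
      refine ⟨⟨fun u => if u ∈ I then (h (coeP u) : ℤ) else (h (coeP u) : ℤ) + 1, ?_⟩, ?_⟩
      · apply (hcond2 _).mpr
        refine ⟨fun u => ⟨?_, ?_⟩, fun u v huv => ?_⟩
        · split_ifs with hu
          · exact_mod_cast hHpos u
          · have := hHpos u
            omega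
        · split_ifs with hu
          · have := hHlt u
            omega
          · have := hHlt u
            omega
        · have hlt := hmonoH (coeP_lt_coeP.mpr huv)
          split_ifs with hu hv hv
          · omega
          · omega
          · exact absurd (I.lower huv.le hv) hu
          · omega
      · apply SetLike.ext
        intro u
        simp only [hf, LowerSet.mem_mk, Set.mem_setOf_eq]
        constructor
        · intro hm
          by_contra hu
          rw [if_neg hu] at hm
          omega
        · intro hu
          rw [if_pos hu]
end

section
/- Let P be a finite pure poset with height function h on P̂ and h_P = h(1̂). Then the translate Δ := (Σ_{u∈P} h(u)·χ_u) − h_P·Δ(P) of the dilated order polytope is a reflexive polytope: the origin is its unique interior lattice point. -/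
section ChainAux

variable {Q : Type*} [PartialOrder Q]

/-- A chain of covering relations, indexed by naturals. -/
def CovChain {n : ℕ} (c : Fin (n + 1) → Q) : Prop :=
  ∀ i, (hi : i < n) → c ⟨i, by omega⟩ ⋖ c ⟨i + 1, by omega⟩

lemma covChain_strictMono {n : ℕ} {c : Fin (n + 1) → Q} (hc : CovChain c) :
    StrictMono c := by
  rw [Fin.strictMono_iff_lt_succ]
  intro i
  have := (hc i.val i.isLt).lt
  have h1 : i.castSucc = (⟨i.val, by omega⟩ : Fin (n+1)) := by ext; simp
  have h2 : i.succ = (⟨i.val + 1, by omega⟩ : Fin (n+1)) := by ext; simp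
  rw [h1, h2]; exact this

lemma covChain_append {n m : ℕ} {c : Fin (n + 1) → Q} {d : Fin (m + 1) → Q}
    (hc : CovChain c) (hd : CovChain d) (hcd : c (Fin.last n) = d 0) :
    ∃ e : Fin (n + m + 1) → Q, e 0 = c 0 ∧ e (Fin.last (n + m)) = d (Fin.last m) ∧ CovChain e := by
  refine ⟨fun i => if h : (i : ℕ) ≤ n then c ⟨i, by omega⟩ else d ⟨i - n, by omega⟩, ?_, ?_, ?_⟩
  · simp
  · by_cases hm : m = 0
    · subst hm
      dsimp only [Fin.last, Fin.val_mk]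
      rw [dif_pos (by omega)]
      rw [show c ⟨n + 0, by omega⟩ = c (Fin.last n) from (by congr 1), hcd]
      congr 1
    · dsimp only [Fin.last, Fin.val_mk]
      rw [dif_neg (by omega)]
      congr 1
      ext; simp
  · intro i hi
    dsimp only [Fin.val_mk]
    by_cases h1 : i + 1 ≤ n
    · rw [dif_pos (by omega), dif_pos (by omega)]
      exact hc i (by omega)
    · by_cases h2 : i ≤ n
      · have hin : i = n := by omega
        have hm : 0 < m := by omega
        rw [dif_pos (by omega), dif_neg (by omega)]
        have e1 : c ⟨i, by omega⟩ = d 0 := by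
          rw [← hcd]; congr 1; ext; simp [hin, Fin.last]
        rw [e1]
        have := hd 0 hm
        convert this using 2 <;> (ext; simp only [Fin.val_zero, Fin.val_mk] <;> omega)
      · rw [dif_neg (by omega), dif_neg (by omega)]
        have := hd (i - n) (by omega)
        convert this using 2 <;> (ext; simp; omega)

end ChainAux

section ChainAux2

variable {Q : Type*} [PartialOrder Q] [Finite Q]

lemma exists_covChain_of_lt (b : Q) :
    ∀ a, a < b → ∃ k, 1 ≤ k ∧ ∃ d : Fin (k + 1) → Q,
      d 0 = a ∧ d (Fin.last k) = b ∧ CovChain d := by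
  intro a
  induction a using (Finite.to_wellFoundedGT (α := Q)).wf.induction with
  | _ a ih =>
    intro hab
    obtain ⟨w, ⟨haw, hwb⟩, hmin⟩ :=
      (Finite.to_wellFoundedLT (α := Q)).wf.has_min {w | a < w ∧ w ≤ b} ⟨b, hab, le_rfl⟩
    have hcov : a ⋖ w := ⟨haw, fun z haz hzw => hmin z ⟨haz, hzw.le.trans hwb⟩ hzw⟩
    have pair : ∃ d : Fin 2 → Q, d 0 = a ∧ d (Fin.last 1) = w ∧ CovChain d := by
      refine ⟨![a, w], rfl, rfl, ?_⟩
      intro i hi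
      interval_cases i
      simpa using hcov
    obtain ⟨d₁, hd0, hd1, hdc⟩ := pair
    rcases eq_or_lt_of_le hwb with h | h
    · exact ⟨1, le_rfl, d₁, hd0, by rw [hd1, h], hdc⟩
    · obtain ⟨k, hk1, d₂, h20, h2l, h2c⟩ := ih w haw h
      obtain ⟨e, he0, hel, hec⟩ := covChain_append hdc h2c (by rw [hd1, h20])
      exact ⟨1 + k, by omega, e, by rw [he0, hd0], by rw [hel, h2l], hec⟩

lemma exists_covChain_bot [OrderBot Q] (a : Q) :
    ∃ k, ∃ d : Fin (k + 1) → Q, d 0 = ⊥ ∧ d (Fin.last k) = a ∧ CovChain d := by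
  rcases eq_or_lt_of_le (bot_le (a := a)) with h | h
  · exact ⟨0, fun _ => a, h.symm, rfl, fun i hi => by omega⟩
  · obtain ⟨k, _, d, h0, hl, hc⟩ := exists_covChain_of_lt a ⊥ h
    exact ⟨k, d, h0, hl, hc⟩

lemma exists_covChain_top [OrderTop Q] (a : Q) :
    ∃ k, ∃ d : Fin (k + 1) → Q, d 0 = a ∧ d (Fin.last k) = ⊤ ∧ CovChain d := by
  rcases eq_or_lt_of_le (le_top (a := a)) with h | h
  · exact ⟨0, fun _ => a, rfl, h, fun i hi => by omega⟩
  · obtain ⟨k, _, d, h0, hl, hc⟩ := exists_covChain_of_lt ⊤ a h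
    exact ⟨k, d, h0, hl, hc⟩

lemma exists_covChain_refine :
    ∀ n (c : Fin (n + 1) → Q), StrictMono c → ∃ k, n ≤ k ∧ ∃ d : Fin (k + 1) → Q,
      d 0 = c 0 ∧ d (Fin.last k) = c (Fin.last n) ∧ CovChain d := by
  intro n
  induction n with
  | zero => exact fun c _ => ⟨0, le_rfl, c, rfl, rfl, fun i hi => by omega⟩
  | succ n ih =>
    intro c hc
    obtain ⟨k, hk, d, hd0, hdl, hdc⟩ := ih (fun i => c i.castSucc)
      (fun i j hij => hc (by simpa using hij))
    have hgap : c (Fin.castSucc (Fin.last n)) < c (Fin.last (n + 1)) :=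
      hc (by simp [Fin.lt_def, Fin.last])
    obtain ⟨k', hk', d', h'0, h'l, h'c⟩ := exists_covChain_of_lt _ _ hgap
    obtain ⟨e, he0, hel, hec⟩ := covChain_append hdc h'c (by rw [hdl, h'0])
    exact ⟨k + k', by omega, e, by rw [he0, hd0]; rfl, by rw [hel, h'l], hec⟩

end ChainAux2

section KeyAux

variable {Q : Type*} [PartialOrder Q]

lemma strictMono_int_bound {k : ℕ} (g : Fin (k + 1) → ℤ) (hg : StrictMono g) :
    g 0 + k ≤ g (Fin.last k) := by
  have key : ∀ i, (hi : i < k + 1) → g 0 + i ≤ g ⟨i, hi⟩ := by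
    intro i
    induction i with
    | zero => intro hi; simp
    | succ i ih =>
      intro hi
      have h1 := ih (by omega)
      have h2 : g ⟨i, by omega⟩ < g ⟨i + 1, hi⟩ := hg (by simp [Fin.lt_def])
      omega
  have := key k (by omega)
  simpa [Fin.last] using this

lemma height_lt_add_one {h : Q → ℕ} (hh : IsHeightFn h) {a b : Q} (hab : a < b) :
    h a + 1 ≤ h b := by
  obtain ⟨c, hc, hcl⟩ := (hh a).1
  refine (hh b).2 ⟨Fin.snoc c b, ?_, Fin.snoc_last _ _⟩
  intro i j hij
  rcases Fin.eq_castSucc_or_eq_last j with ⟨j', rfl⟩ | rfl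
  · rcases Fin.eq_castSucc_or_eq_last i with ⟨i', rfl⟩ | rfl
    · rw [Fin.snoc_castSucc, Fin.snoc_castSucc]
      exact hc (by simpa using hij)
    · exact absurd hij (by simp [Fin.lt_def, Fin.last])
  · rcases Fin.eq_castSucc_or_eq_last i with ⟨i', rfl⟩ | rfl
    · rw [Fin.snoc_castSucc, Fin.snoc_last]
      calc c i' ≤ c (Fin.last _) := hc.monotone (Fin.le_last _)
        _ = a := hcl
        _ < b := hab
    · exact absurd hij (lt_irrefl _)

lemma covChain_isMaxChain' [BoundedOrder Q] {n : ℕ} {c : Fin (n + 1) → Q}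
    (h0 : c 0 = ⊥) (hl : c (Fin.last n) = ⊤) (hc : CovChain c) : IsMaxChain' c := by
  refine ⟨h0, hl, fun i => ?_⟩
  have := hc i.val i.isLt
  have e1 : i.castSucc = (⟨i.val, by omega⟩ : Fin (n + 1)) := by ext; simp
  have e2 : i.succ = (⟨i.val + 1, by omega⟩ : Fin (n + 1)) := by ext; simp
  rw [e1, e2]; exact this

/-- The key combinatorial lemma. -/
lemma key_lemma [BoundedOrder Q] [Finite Q] {h : Q → ℕ} (hh : IsHeightFn h)
    (hpure : ∀ (n m : ℕ) (c : Fin (n + 1) → Q) (c' : Fin (m + 1) → Q),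
      IsMaxChain' c → IsMaxChain' c' → n = m)
    (M : Q → ℤ) (hM : StrictMono M) (hbot : M ⊥ = 0) (htop : M ⊤ = (h ⊤ : ℤ))
    (a : Q) : M a = (h a : ℤ) := by
  -- a reference maximal chain of length ≥ h ⊤
  obtain ⟨c₀, hc₀, hc₀l⟩ := (hh ⊤).1
  obtain ⟨k₀, hk₀, d₀, hd₀0, hd₀l, hd₀c⟩ := exists_covChain_refine _ c₀ hc₀
  obtain ⟨j₀, e₀, he₀0, he₀l, he₀c⟩ := exists_covChain_bot (c₀ 0)
  obtain ⟨E, hE0, hEl, hEc⟩ := covChain_append he₀c hd₀c (by rw [he₀l, hd₀0])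
  have hEmax : IsMaxChain' E :=
    covChain_isMaxChain' (by rw [hE0, he₀0]) (by rw [hEl, hd₀l, hc₀l]) hEc
  -- a maximal chain through a
  obtain ⟨j, dj, hdj0, hdjl, hdjc⟩ := exists_covChain_bot a
  obtain ⟨k, dk, hdk0, hdkl, hdkc⟩ := exists_covChain_top a
  obtain ⟨F, hF0, hFl, hFc⟩ := covChain_append hdjc hdkc (by rw [hdjl, hdk0])
  have hFmax : IsMaxChain' F :=
    covChain_isMaxChain' (by rw [hF0, hdj0]) (by rw [hFl, hdkl]) hFc
  have hlen : j + k = j₀ + k₀ := hpure _ _ F E hFmax hEmax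
  -- j ≤ h a
  have hja : j ≤ h a := (hh a).2 ⟨dj, covChain_strictMono hdjc, hdjl⟩
  -- M ⊤ ≥ M a + k
  have hMk : M a + k ≤ (h ⊤ : ℤ) := by
    have := strictMono_int_bound (fun i => M (dk i)) (hM.comp (covChain_strictMono hdkc))
    rw [hdk0, hdkl, htop] at this
    exact this
  -- M a ≥ h a
  have hMa : (h a : ℤ) ≤ M a := by
    obtain ⟨c, hc, hcl⟩ := (hh a).1
    have := strictMono_int_bound (fun i => M (c i)) (hM.comp hc)
    rw [hcl] at this
    have h0 : (0 : ℤ) ≤ M (c 0) := by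
      rw [← hbot]; exact hM.monotone bot_le
    omega
  omega

end KeyAux

/-- For a finite pure poset `P` with height function `h` on `P̂` and
`h_P = h(1̂)`, the translated dilated order polytope
`Δ = (Σ_u h(u)·χ_u) − h_P·Δ(P)` is reflexive in the sense that the origin is
its unique interior lattice point. -/
theorem stmt_15 (P : Type*) [Fintype P] [PartialOrder P]
    (h : WithBot (WithTop P) → ℕ) (hh : IsHeightFn h)
    (hpure : ∀ (n m : ℕ) (c : Fin (n + 1) → WithBot (WithTop P))
      (c' : Fin (m + 1) → WithBot (WithTop P)),
      IsMaxChain' c → IsMaxChain' c' → n = m) :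
    (0 : P → ℝ) ∈ interior {y : P → ℝ | ∃ x ∈ orderPolytope P,
        y = fun (u : P) => (h ((u : WithTop P) : WithBot (WithTop P)) : ℝ) - (h ⊤ : ℝ) * x u} ∧
    ∀ y : P → ℤ, (fun u => (y u : ℝ)) ∈ interior {y : P → ℝ | ∃ x ∈ orderPolytope P,
        y = fun (u : P) => (h ((u : WithTop P) : WithBot (WithTop P)) : ℝ) - (h ⊤ : ℝ) * x u} →
      y = 0 := by
  classical
  have hlt : ∀ a b : WithBot (WithTop P), a < b → h a + 1 ≤ h b :=
    fun a b hab => height_lt_add_one hh hab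
  have hHP : 1 ≤ h ⊤ := by
    have := hlt ⊥ ⊤ (WithBot.bot_lt_coe (⊤ : WithTop P))
    omega
  have hH0 : (0:ℝ) < (h ⊤ : ℝ) := by exact_mod_cast hHP
  have h1 : ∀ u : P, 1 ≤ h ((u : WithTop P) : WithBot (WithTop P)) := by
    intro u
    have := hlt ⊥ _ (WithBot.bot_lt_coe ((u : WithTop P)))
    omega
  have h2 : ∀ u : P, h ((u : WithTop P) : WithBot (WithTop P)) + 1 ≤ h ⊤ :=
    fun u => hlt _ _ (WithBot.coe_lt_coe.mpr (WithTop.coe_lt_top u))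
  have h3 : ∀ u v : P, u < v →
      h ((u : WithTop P) : WithBot (WithTop P)) + 1 ≤ h ((v : WithTop P) : WithBot (WithTop P)) :=
    fun u v huv => hlt _ _ (by exact_mod_cast huv)
  constructor
  · rw [mem_interior]
    refine ⟨Metric.ball 0 (1/3), ?_, Metric.isOpen_ball, Metric.mem_ball_self (by norm_num)⟩
    intro y hy
    have hy' : ∀ u : P, |y u| < 1/3 := by
      intro u
      rw [Metric.mem_ball] at hy
      calc |y u| = dist (y u) ((0 : P → ℝ) u) := by simp [Real.dist_eq]
        _ ≤ dist y 0 := dist_le_pi_dist y 0 u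
        _ < 1/3 := hy
    refine ⟨fun u => ((h ((u : WithTop P) : WithBot (WithTop P)) : ℝ) - y u) / (h ⊤:ℝ),
      ⟨fun u => ⟨?_, ?_⟩, fun u v huv => ?_⟩, ?_⟩
    · apply div_nonneg _ hH0.le
      have hc : (1:ℝ) ≤ (h ((u : WithTop P) : WithBot (WithTop P)) : ℝ) := by exact_mod_cast h1 u
      linarith [(abs_lt.mp (hy' u)).2]
    · rw [div_le_one hH0]
      have hc : (h ((u : WithTop P) : WithBot (WithTop P)) : ℝ) + 1 ≤ (h ⊤:ℝ) := by
        exact_mod_cast h2 u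
      linarith [(abs_lt.mp (hy' u)).1]
    · rcases eq_or_lt_of_le huv with rfl | huv'
      · exact le_refl _
      · rw [div_le_div_iff_of_pos_right hH0]
        have hc : (h ((u : WithTop P) : WithBot (WithTop P)) : ℝ) + 1 ≤
            (h ((v : WithTop P) : WithBot (WithTop P)) : ℝ) := by exact_mod_cast h3 u v huv'
        linarith [(abs_lt.mp (hy' u)).1, (abs_lt.mp (hy' v)).2]
    · funext u
      have hne : (h ⊤:ℝ) ≠ 0 := ne_of_gt hH0
      field_simp
      ring
  · intro y hy
    obtain ⟨ε, hε, hball⟩ := Metric.mem_nhds_iff.mp (mem_interior_iff_mem_nhds.mp hy)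
    have extract : ∀ z : P → ℝ, dist z (fun u => (y u:ℝ)) < ε →
        (∀ u : P, 0 ≤ (h ((u : WithTop P) : WithBot (WithTop P)):ℝ) - z u ∧
          (h ((u : WithTop P) : WithBot (WithTop P)):ℝ) - z u ≤ (h ⊤:ℝ)) ∧
        ∀ u v : P, u ≤ v → (h ((u : WithTop P) : WithBot (WithTop P)):ℝ) - z u ≤
          (h ((v : WithTop P) : WithBot (WithTop P)):ℝ) - z v := by
      intro z hz
      obtain ⟨x, ⟨hx01, hxm⟩, hzx⟩ := hball (Metric.mem_ball.mpr hz)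
      have hxu : ∀ u : P, (h ⊤:ℝ) * x u = (h ((u : WithTop P) : WithBot (WithTop P)):ℝ) - z u := by
        intro u; have := congrFun hzx u; linarith
      refine ⟨fun u => ⟨?_, ?_⟩, fun u v huv => ?_⟩
      · rw [← hxu u]; exact mul_nonneg hH0.le (hx01 u).1
      · rw [← hxu u]
        calc (h ⊤:ℝ) * x u ≤ (h ⊤:ℝ) * 1 := mul_le_mul_of_nonneg_left (hx01 u).2 hH0.le
          _ = _ := mul_one _
      · rw [← hxu u, ← hxu v]; exact mul_le_mul_of_nonneg_left (hxm u v huv) hH0.le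
    have hpert : ∀ s : P → ℝ, (∀ w, |s w| ≤ ε/2) →
        dist (fun w => (y w:ℝ) + s w) (fun u => (y u:ℝ)) < ε := by
      intro s hs
      have hle : dist (fun w => (y w:ℝ) + s w) (fun u => (y u:ℝ)) ≤ ε/2 :=
        (dist_pi_le_iff (by linarith)).mpr (fun w => by
          rw [Real.dist_eq]; simpa using hs w)
      linarith
    have c1 : ∀ u : P, 1 ≤ (h ((u : WithTop P) : WithBot (WithTop P)):ℤ) - y u := by
      intro u
      have habs : ∀ w : P, |(if w = u then ε/2 else 0 : ℝ)| ≤ ε/2 := by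
        intro w; split_ifs
        · rw [abs_of_nonneg (by linarith)]
        · simp; linarith
      have h0 := ((extract (fun w => (y w:ℝ) + if w = u then ε/2 else 0)
        (hpert _ habs)).1 u).1
      simp only [if_pos rfl, if_true] at h0
      have hr : (0:ℝ) < ((h ((u : WithTop P) : WithBot (WithTop P)):ℤ) - y u : ℤ) := by
        push_cast; linarith
      have hz : (0:ℤ) < (h ((u : WithTop P) : WithBot (WithTop P)):ℤ) - y u := by exact_mod_cast hr
      omega
    have c2 : ∀ u : P, (h ((u : WithTop P) : WithBot (WithTop P)):ℤ) - y u < (h ⊤:ℤ) := by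
      intro u
      have habs : ∀ w : P, |(if w = u then -(ε/2) else 0 : ℝ)| ≤ ε/2 := by
        intro w; split_ifs
        · rw [abs_neg, abs_of_nonneg (by linarith)]
        · simp; linarith
      have h0 := ((extract (fun w => (y w:ℝ) + if w = u then -(ε/2) else 0)
        (hpert _ habs)).1 u).2
      simp only [if_pos rfl, if_true] at h0
      have hr : (((h ((u : WithTop P) : WithBot (WithTop P)):ℤ) - y u : ℤ) : ℝ) < ((h ⊤:ℤ):ℝ) := by
        push_cast; linarith
      exact_mod_cast hr
    have c3 : ∀ u v : P, u < v →
        (h ((u : WithTop P) : WithBot (WithTop P)):ℤ) - y u <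
        (h ((v : WithTop P) : WithBot (WithTop P)):ℤ) - y v := by
      intro u v huv
      have habs : ∀ w : P, |(if w = u then -(ε/2) else if w = v then ε/2 else 0 : ℝ)| ≤ ε/2 := by
        intro w; split_ifs
        · rw [abs_neg, abs_of_nonneg (by linarith)]
        · rw [abs_of_nonneg (by linarith)]
        · simp; linarith
      have h0 := (extract (fun w => (y w:ℝ) + if w = u then -(ε/2) else if w = v then ε/2 else 0)
        (hpert _ habs)).2 u v huv.le
      simp only [if_pos rfl, if_true, if_neg (huv.ne' : v ≠ u)] at h0
      have hr : (((h ((u : WithTop P) : WithBot (WithTop P)):ℤ) - y u : ℤ) : ℝ) <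
          (((h ((v : WithTop P) : WithBot (WithTop P)):ℤ) - y v : ℤ) : ℝ) := by
        push_cast; linarith
      exact_mod_cast hr
    have hMmono : StrictMono (fun a : WithBot (WithTop P) =>
        Option.elim (a : Option (Option P)) 0 (fun t => Option.elim t ((h ⊤:ℤ))
          (fun u => (h ((u : WithTop P) : WithBot (WithTop P)):ℤ) - y u))) := by
      intro a b hab
      rcases b with _ | (_ | v)
      · exact absurd hab (WithBot.not_lt_bot a)
      · rcases a with _ | (_ | u)
        · show (0:ℤ) < (h ⊤:ℤ)
          exact_mod_cast hHP
        · exact absurd hab (lt_irrefl _)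
        · show (h ((u : WithTop P) : WithBot (WithTop P)):ℤ) - y u < (h ⊤:ℤ)
          exact c2 u
      · rcases a with _ | (_ | u)
        · show (0:ℤ) < (h ((v : WithTop P) : WithBot (WithTop P)):ℤ) - y v
          linarith [c1 v]
        · exact absurd (WithBot.coe_lt_coe.mp hab) not_top_lt
        · exact c3 u v (WithTop.coe_lt_coe.mp (WithBot.coe_lt_coe.mp hab))
    haveI : Finite (WithBot (WithTop P)) := by unfold WithBot WithTop; infer_instance
    have final := key_lemma hh hpure _ hMmono rfl rfl
    funext u
    have hu : (h ((u : WithTop P) : WithBot (WithTop P)):ℤ) - y u =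
        (h ((u : WithTop P) : WithBot (WithTop P)):ℤ) :=
      final ((u : WithTop P) : WithBot (WithTop P))
    simp only [Pi.zero_apply]
    omega
end
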